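/- If T ∈ 𝒯_hom admits a p,q-invariant strip, then ω and ρ_T are rationally dependent, i.e. there exist integers l, k, q' with q' ≠ 0 such that ρ_T = (k/q')ω + (l/q') mod 1; moreover all orbits of T are ρ_T-bounded. -/

import Mathlib

open Set Filter Topology Function

noncomputable section

/-- The fibre maps of the iterates of the lifted skew product:
`fibIter F ω θ n x = T̂ⁿ_θ(x̂)`. -/
def fibIter (F : ℝ → ℝ → ℝ) (ω : ℝ) (θ : ℝ) : ℕ → ℝ → ℝ
  | 0, x => x
  | n + 1, x => F (θ + n * ω) (fibIter F ω θ n x)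

/-- The fibre of a subset of a product over a base point. -/
def fiber {α β : Type*} (A : Set (α × β)) (θ : α) : Set β := {x | (θ, x) ∈ A}

/-- A nonempty proper open arc in the circle `ℝ/Pℤ`. -/
def IsArc (P : ℝ) (S : Set (AddCircle P)) : Prop :=
  ∃ a b : ℝ, a < b ∧ b - a < P ∧ S = (fun t : ℝ => (t : AddCircle P)) '' Set.Ioo a b

/-- `U` is a `p,q`-invariant open tube for `T` on the torus `ℝ/Lℤ × ℝ/Pℤ`:
`U` is the disjoint union of `p` open sets cyclically permuted by `T`, the first of which
is `T^p`-invariant and consists on every fibre of `q` disjoint open arcs, each containing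
the corresponding branch of a `q`-curve `γ`. -/
def IsPQTube (L P : ℝ) (T : AddCircle L × AddCircle P → AddCircle L × AddCircle P)
    (p q : ℕ) (U : Set (AddCircle L × AddCircle P)) : Prop :=
  ∃ (U1 : Set (AddCircle L × AddCircle P)) (γ : ℝ → ℝ) (k : ℤ),
    IsOpen U1 ∧ Continuous γ ∧
    (∀ t : ℝ, γ (t + q * L) = γ t + k * P) ∧
    (∀ t : ℝ, ∀ l : ℕ, 1 ≤ l → l < q → ¬∃ m : ℤ, γ (t + l * L) - γ t = m * P) ∧
    T^[p] '' U1 = U1 ∧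
    (∀ θ : ℝ, ∃ V : Fin q → Set (AddCircle P),
      (∀ j, IsArc P (V j)) ∧ Pairwise (Function.onFun Disjoint V) ∧
      (⋃ j, V j) = fiber U1 (θ : AddCircle L) ∧
      ∀ j : Fin q, ((γ (θ + j * L) : ℝ) : AddCircle P) ∈ V j) ∧
    Pairwise (Function.onFun Disjoint fun i : Fin p => T^[(i : ℕ)] '' U1) ∧
    U = ⋃ i : Fin p, T^[(i : ℕ)] '' U1

/-- A `p,q`-invariant strip: a compact invariant set whose complement is a
`p,q`-invariant open tube. -/
def IsPQInvStrip (L P : ℝ) (T : AddCircle L × AddCircle P → AddCircle L × AddCircle P)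
    (p q : ℕ) (A : Set (AddCircle L × AddCircle P)) : Prop :=
  0 < p ∧ 0 < q ∧ IsCompact A ∧ T '' A = A ∧ IsPQTube L P T p q Aᶜ

namespace StripProofAux

lemma coe_eq_coe_iff {x y : ℝ} :
    ((x : ℝ) : AddCircle (1:ℝ)) = ((y : ℝ) : AddCircle (1:ℝ)) ↔ ∃ n : ℤ, y = x + n := by
  constructor
  · intro h
    have h2 : ((y - x : ℝ) : AddCircle (1:ℝ)) = 0 := by
      rw [AddCircle.coe_sub, h, sub_self]
    obtain ⟨n, hn⟩ := (AddCircle.coe_eq_zero_iff (1:ℝ)).mp h2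
    refine ⟨n, ?_⟩
    have h3 : (n : ℝ) * 1 = y - x := by simpa [zsmul_eq_mul] using hn
    linarith
  · rintro ⟨n, rfl⟩
    have h0 : ((n : ℝ) : AddCircle (1:ℝ)) = 0 := by
      rw [AddCircle.coe_eq_zero_iff]
      exact ⟨n, by simp [zsmul_eq_mul]⟩
    rw [AddCircle.coe_add, h0, add_zero]

lemma coe_int_add (x : ℝ) (d : ℤ) :
    ((x + d : ℝ) : AddCircle (1:ℝ)) = ((x : ℝ) : AddCircle (1:ℝ)) :=
  (coe_eq_coe_iff.mpr ⟨d, rfl⟩).symm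

lemma continuous_coe : Continuous (fun x : ℝ => (x : AddCircle (1:ℝ))) :=
  AddCircle.continuous_mk' 1

lemma fibIter_succ (F : ℝ → ℝ → ℝ) (ω θ : ℝ) (n : ℕ) (x : ℝ) :
    fibIter F ω θ (n+1) x = F (θ + n * ω) (fibIter F ω θ n x) := rfl

lemma fibIter_add (F : ℝ → ℝ → ℝ) (ω θ : ℝ) (m n : ℕ) (x : ℝ) :
    fibIter F ω θ (m + n) x = fibIter F ω (θ + m * ω) n (fibIter F ω θ m x) := by
  induction n with
  | zero => rfl
  | succ n ih =>
    have h1 : θ + ((m + n : ℕ) : ℝ) * ω = θ + (m : ℝ) * ω + (n : ℝ) * ω := by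
      push_cast; ring
    rw [show m + (n+1) = (m + n) + 1 from rfl, fibIter_succ, fibIter_succ, ih, h1]


end StripProofAux
section
variable {F : ℝ → ℝ → ℝ} {ω : ℝ}

lemma F_int (hFx : ∀ θ x : ℝ, F θ (x + 1) = F θ x + 1) (θ x : ℝ) (d : ℤ) :
    F θ (x + d) = F θ x + d := by
  induction d using Int.induction_on with
  | zero => simp
  | succ n ih => push_cast at ih ⊢; rw [show x + ((n:ℝ)+1) = (x + n) + 1 by ring, hFx, ih]; ring
  | pred n ih =>
    push_cast at ih ⊢
    have := hFx θ (x - (n:ℝ) - 1)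
    rw [show x - (n:ℝ) - 1 + 1 = x - n by ring] at this
    rw [show x + (-(n:ℝ) - 1) = x - n - 1 by ring]
    rw [show x + -(n:ℝ) = x - n by ring] at ih
    linarith [this, ih]

lemma Fθ_int (hFθ : ∀ θ x : ℝ, F (θ + 1) x = F θ x) (θ x : ℝ) (d : ℤ) :
    F (θ + d) x = F θ x := by
  induction d using Int.induction_on with
  | zero => simp
  | succ n ih => push_cast at ih ⊢; rw [show θ + ((n:ℝ)+1) = (θ + n) + 1 by ring, hFθ, ih]
  | pred n ih =>
    push_cast at ih ⊢
    have := hFθ (θ - (n:ℝ) - 1) x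
    rw [show θ - (n:ℝ) - 1 + 1 = θ - n by ring] at this
    rw [show θ + (-(n:ℝ) - 1) = θ - n - 1 by ring]
    rw [show θ + -(n:ℝ) = θ - n by ring] at ih
    rw [← this]
    exact ih

lemma fibIter_int (hFx : ∀ θ x : ℝ, F θ (x + 1) = F θ x + 1) (θ : ℝ) (n : ℕ) (x : ℝ) (d : ℤ) :
    fibIter F ω θ n (x + d) = fibIter F ω θ n x + d := by
  induction n with
  | zero => rfl
  | succ n ih => rw [StripProofAux.fibIter_succ, StripProofAux.fibIter_succ, ih, F_int hFx]

lemma fibIter_base_int (hFθ : ∀ θ x : ℝ, F (θ + 1) x = F θ x) (θ : ℝ) (n : ℕ) (x : ℝ) (d : ℤ) :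
    fibIter F ω (θ + d) n x = fibIter F ω θ n x := by
  induction n with
  | zero => rfl
  | succ n ih =>
    rw [StripProofAux.fibIter_succ, StripProofAux.fibIter_succ, ih,
      show θ + (d:ℝ) + (n:ℝ) * ω = (θ + n * ω) + d by ring, Fθ_int hFθ]

lemma fibIter_mono (hFm : ∀ θ : ℝ, StrictMono (F θ)) (θ : ℝ) (n : ℕ) :
    Monotone (fibIter F ω θ n) := by
  induction n with
  | zero => exact monotone_id
  | succ n ih => exact fun x y h => (hFm _).monotone (ih h)

lemma fibIter_cont (hFc : Continuous fun p : ℝ × ℝ => F p.1 p.2) (n : ℕ) :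
    Continuous (fun p : ℝ × ℝ => fibIter F ω p.1 n p.2) := by
  induction n with
  | zero => exact continuous_snd
  | succ n ih =>
    have : Continuous (fun p : ℝ × ℝ => ((p.1 + n * ω, fibIter F ω p.1 n p.2) : ℝ × ℝ)) :=
      (continuous_fst.add continuous_const).prodMk ih
    exact hFc.comp this

end
namespace StripProofAux

/-- The lift to `ℝ` of the fibre of `U` over `θ`. -/
def Uhat (U : Set (AddCircle (1:ℝ) × AddCircle (1:ℝ))) (θ : ℝ) : Set ℝ :=
  {x : ℝ | ((θ : AddCircle (1:ℝ)), (x : AddCircle (1:ℝ))) ∈ U}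

/-- `x` and `y` lie in the same "lifted component" of the fibre of `U` over `θ`. -/
def SC (U : Set (AddCircle (1:ℝ) × AddCircle (1:ℝ))) (θ x y : ℝ) : Prop :=
  Set.uIcc x y ⊆ Uhat U θ

variable {U : Set (AddCircle (1:ℝ) × AddCircle (1:ℝ))}

lemma Uhat_base_int (θ : ℝ) (d : ℤ) : Uhat U (θ + d) = Uhat U θ := by
  ext x; unfold Uhat; rw [mem_setOf_eq, mem_setOf_eq, coe_int_add]

lemma mem_Uhat_int {θ x : ℝ} (d : ℤ) (h : x ∈ Uhat U θ) : x + d ∈ Uhat U θ := by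
  unfold Uhat at h ⊢; rwa [mem_setOf_eq, coe_int_add]

lemma SC.symm {θ x y : ℝ} (h : SC U θ x y) : SC U θ y x := by
  unfold SC at h ⊢; rwa [Set.uIcc_comm]

lemma SC.trans {θ x y z : ℝ} (h1 : SC U θ x y) (h2 : SC U θ y z) : SC U θ x z :=
  fun w hw => (Set.uIcc_subset_uIcc_union_uIcc hw).elim (fun h => h1 h) (fun h => h2 h)

lemma SC.base_int {θ x y : ℝ} (d : ℤ) (h : SC U θ x y) : SC U (θ + d) x y := by
  unfold SC; rwa [Uhat_base_int]

lemma SC.base_congr {θ θ' x y : ℝ} (d : ℤ) (he : θ' = θ + d) (h : SC U θ x y) : SC U θ' x y :=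
  he ▸ h.base_int d

lemma SC.int {θ x y : ℝ} (d : ℤ) (h : SC U θ x y) : SC U θ (x + d) (y + d) := by
  intro z hz
  have h1 : x ⊓ y + (d:ℝ) ≤ z := by
    have h' := hz.1; rwa [min_add_add_right] at h'
  have h2 : z ≤ x ⊔ y + (d:ℝ) := by
    have h' := hz.2; rwa [max_add_add_right] at h'
  have hz' : z - d ∈ Set.uIcc x y := by
    constructor
    · linarith
    · linarith
  have hm := mem_Uhat_int d (h hz')
  rwa [sub_add_cancel] at hm

lemma SC.refl {θ x : ℝ} (h : x ∈ Uhat U θ) : SC U θ x x := by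
  intro z hz; rw [Set.uIcc_self, Set.mem_singleton_iff] at hz; rwa [hz]

/-- Mapping lemma: a continuous map sending the fibre into another fibre preserves `SC`. -/
lemma SC.map {θ θ' x y : ℝ} {G : ℝ → ℝ} (hGc : Continuous G)
    (hG : ∀ z ∈ Uhat U θ, G z ∈ Uhat U θ') (h : SC U θ x y) : SC U θ' (G x) (G y) := by
  intro z hz
  obtain ⟨w, hw, rfl⟩ := intermediate_value_uIcc (hGc.continuousOn) hz
  exact hG w (h hw)

/-- Openness of the `SC` relation along continuous data. -/
lemma SC_open (hU : IsOpen U) (g h : ℝ → ℝ) (hg : Continuous g) (hh : Continuous h) (e : ℝ) :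
    IsOpen {t : ℝ | SC U (t + e) (g t) (h t)} := by
  rw [isOpen_iff_mem_nhds]
  intro t ht
  set W : Set (ℝ × ℝ) :=
    (fun p : ℝ × ℝ => ((p.1 : AddCircle (1:ℝ)), (p.2 : AddCircle (1:ℝ)))) ⁻¹' U with hW
  have hWopen : IsOpen W := hU.preimage ((continuous_coe.comp continuous_fst).prodMk
    (continuous_coe.comp continuous_snd))
  have hK : IsCompact ({t + e} ×ˢ Set.uIcc (g t) (h t)) :=
    isCompact_singleton.prod isCompact_uIcc
  have hKW : ({t + e} ×ˢ Set.uIcc (g t) (h t)) ⊆ W := by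
    rintro ⟨u, z⟩ ⟨hu, hz⟩
    rw [Set.mem_singleton_iff] at hu
    subst hu
    exact ht hz
  obtain ⟨δ, hδ, hsub⟩ := hK.exists_thickening_subset_open hWopen hKW
  obtain ⟨ε1, hε1, hg1⟩ := Metric.continuousAt_iff.mp (hg.continuousAt (x := t)) (δ/2) (by linarith)
  obtain ⟨ε2, hε2, hh1⟩ := Metric.continuousAt_iff.mp (hh.continuousAt (x := t)) (δ/2) (by linarith)
  have hball : Metric.ball t (min (min ε1 ε2) (δ/2)) ∈ nhds t :=
    Metric.ball_mem_nhds t (by positivity)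
  refine Filter.mem_of_superset hball ?_
  intro t' ht'
  rw [Metric.mem_ball] at ht'
  have hdt : dist t' t < δ/2 := lt_of_lt_of_le ht' (min_le_right _ _)
  have hdg : dist (g t') (g t) < δ/2 :=
    hg1 (lt_of_lt_of_le ht' ((min_le_left _ _).trans (min_le_left _ _)))
  have hdh : dist (h t') (h t) < δ/2 :=
    hh1 (lt_of_lt_of_le ht' ((min_le_left _ _).trans (min_le_right _ _)))
  rw [Real.dist_eq] at hdg hdh
  have hmin : |min (g t) (h t) - min (g t') (h t')| < δ/2 :=
    lt_of_le_of_lt (abs_min_sub_min_le_max _ _ _ _)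
      (max_lt (by rw [abs_sub_comm]; exact hdg) (by rw [abs_sub_comm]; exact hdh))
  have hmax : |max (g t) (h t) - max (g t') (h t')| < δ/2 :=
    lt_of_le_of_lt (abs_max_sub_max_le_max _ _ _ _)
      (max_lt (by rw [abs_sub_comm]; exact hdg) (by rw [abs_sub_comm]; exact hdh))
  intro z hz
  have h1 : min (g t') (h t') ≤ z := hz.1
  have h2 : z ≤ max (g t') (h t') := hz.2
  -- project z to uIcc (g t) (h t)
  set w : ℝ := max (min z (max (g t) (h t))) (min (g t) (h t)) with hwdef
  have hwmem : w ∈ Set.uIcc (g t) (h t) := by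
    constructor
    · exact le_max_right _ _
    · exact max_le (min_le_right _ _) min_le_max
  have hzw : |z - w| < δ/2 := by
    have e1 := le_abs_self (min (g t) (h t) - min (g t') (h t'))
    have e2 := neg_abs_le (max (g t) (h t) - max (g t') (h t'))
    rcases le_or_gt z (min (g t) (h t)) with hc | hc
    · have hwv : w = min (g t) (h t) := by
        rw [hwdef, max_eq_right]
        exact le_trans (min_le_left _ _) hc
      rw [hwv, abs_sub_comm, abs_of_nonneg (by linarith)]
      linarith
    · rcases le_or_gt z (max (g t) (h t)) with hc2 | hc2
      · have hwv : w = z := by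
          rw [hwdef, min_eq_left hc2, max_eq_left hc.le]
        rw [hwv, sub_self, abs_zero]; linarith
      · have hwv : w = max (g t) (h t) := by
          rw [hwdef, min_eq_right hc2.le, max_eq_left min_le_max]
        rw [hwv, abs_of_nonneg (by linarith)]
        linarith
  have hdist : dist (t' + e, z) ((t + e, w) : ℝ × ℝ) < δ := by
    rw [Prod.dist_eq]
    refine max_lt ?_ ?_
    · rw [Real.dist_eq, add_sub_add_right_eq_sub, ← Real.dist_eq]; linarith
    · rw [Real.dist_eq]; linarith [hzw]
  have hmem : ((t' + e, z) : ℝ × ℝ) ∈ Metric.thickening δ ({t + e} ×ˢ Set.uIcc (g t) (h t)) :=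
    Metric.mem_thickening_iff.mpr ⟨(t + e, w), ⟨rfl, hwmem⟩, hdist⟩
  exact hsub hmem

end StripProofAux
namespace StripProofAux

lemma arc_isOpen {S : Set (AddCircle (1:ℝ))} (h : IsArc 1 S) : IsOpen S := by
  obtain ⟨a, b, _, _, rfl⟩ := h
  exact QuotientAddGroup.isOpenMap_coe _ isOpen_Ioo

lemma exists_outside {qn : ℕ} (hq : 0 < qn) (V : Fin qn → Set (AddCircle (1:ℝ)))
    (harc : ∀ j, IsArc 1 (V j)) (hdisj : Pairwise (Function.onFun Disjoint V)) :
    ∃ z : ℝ, ∀ j, ((z : ℝ) : AddCircle (1:ℝ)) ∉ V j := by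
  obtain ⟨a, b, hab, hba, hV0⟩ := harc ⟨0, hq⟩
  refine ⟨b, fun j hj => ?_⟩
  by_cases hj0 : j = ⟨0, hq⟩
  · subst hj0
    rw [hV0] at hj
    obtain ⟨w, hw, hwb⟩ := hj
    obtain ⟨n, hn⟩ := coe_eq_coe_iff.mp hwb
    have h1 : (0:ℝ) < n := by
      have := hw.2; simp only [Set.mem_Ioo] at hw; linarith
    have h2 : (n:ℝ) < 1 := by
      simp only [Set.mem_Ioo] at hw; linarith
    have h3 : (0:ℤ) < n := by exact_mod_cast h1
    have h4 : (n:ℤ) < 1 := by exact_mod_cast h2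
    omega
  · have hpre : IsOpen ((fun z : ℝ => (z : AddCircle (1:ℝ))) ⁻¹' (V j)) :=
      (arc_isOpen (harc j)).preimage continuous_coe
    obtain ⟨ε, hε, hball⟩ := Metric.isOpen_iff.mp hpre b hj
    set z := max (b - ε/2) ((a+b)/2) with hzdef
    have hz1 : z ∈ Set.Ioo a b := by
      constructor
      · exact lt_of_lt_of_le (by linarith) (le_max_right _ _)
      · exact max_lt (by linarith) (by linarith)
    have hz2 : z ∈ Metric.ball b ε := by
      rw [Metric.mem_ball, Real.dist_eq, abs_of_nonpos (by
        simp only [hzdef]; rw [sub_nonpos]; exact max_le (by linarith) (by linarith))]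
      have : b - ε/2 ≤ z := le_max_left _ _
      linarith
    have hmem1 : ((z:ℝ) : AddCircle (1:ℝ)) ∈ V j := hball hz2
    have hmem2 : ((z:ℝ) : AddCircle (1:ℝ)) ∈ V ⟨0, hq⟩ := by
      rw [hV0]; exact ⟨z, hz1, rfl⟩
    exact Set.disjoint_left.mp (hdisj hj0) hmem1 hmem2

variable {U : Set (AddCircle (1:ℝ) × AddCircle (1:ℝ))}

lemma SC_lt_one {θ x y z : ℝ} (hz : z ∉ Uhat U θ) (h : SC U θ x y) : |x - y| < 1 := by
  by_contra hcon
  push_neg at hcon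
  set m : ℤ := ⌈x ⊓ y - z⌉ with hmdef
  have h1 : x ⊓ y ≤ z + m := by
    have := Int.le_ceil (x ⊓ y - z); rw [← hmdef] at this; linarith
  have h2 : z + m ≤ x ⊔ y := by
    have hc := Int.ceil_lt_add_one (x ⊓ y - z)
    rw [← hmdef] at hc
    have habs : x ⊓ y + |x - y| = x ⊔ y := by
      rcases le_total x y with hxy | hxy
      · rw [min_eq_left hxy, max_eq_right hxy, abs_of_nonpos (by linarith)]; ring
      · rw [min_eq_right hxy, max_eq_left hxy, abs_of_nonneg (by linarith)]; ring
    linarith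
  have hin : z + (m:ℝ) ∈ Uhat U θ := h ⟨h1, h2⟩
  have hz' : z ∈ Uhat U θ := by
    have := mem_Uhat_int (-m) hin
    rw [show z + (m:ℝ) + ((-m : ℤ):ℝ) = z by push_cast; ring] at this
    exact this
  exact hz hz'

lemma branch_uniq {qn : ℕ} {γ : ℝ → ℝ} {θ' : ℝ}
    (V : Fin qn → Set (AddCircle (1:ℝ)))
    (hq : 0 < qn)
    (harc : ∀ j, IsArc 1 (V j)) (hdisj : Pairwise (Function.onFun Disjoint V))
    (hunion : (⋃ j, V j) = fiber U (θ' : AddCircle (1:ℝ)))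
    (hbranch : ∀ j : Fin qn, ((γ (θ' + j) : ℝ) : AddCircle (1:ℝ)) ∈ V j)
    {j j' : Fin qn} {m m' : ℤ}
    (h : SC U θ' (γ (θ' + j) + m) (γ (θ' + j') + m')) : j = j' ∧ m = m' := by
  have hfibeq : ∀ w : ℝ, w ∈ Uhat U θ' ↔ ((w:ℝ) : AddCircle (1:ℝ)) ∈ ⋃ i, V i := by
    intro w; rw [hunion]; exact Iff.rfl
  have hca : ((γ (θ' + j) + (m:ℝ) : ℝ) : AddCircle (1:ℝ)) = ((γ (θ' + j) : ℝ) : AddCircle (1:ℝ)) :=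
    coe_int_add _ m
  have hcb : ((γ (θ' + j') + (m':ℝ) : ℝ) : AddCircle (1:ℝ)) = ((γ (θ' + j') : ℝ) : AddCircle (1:ℝ)) :=
    coe_int_add _ m'
  have hjj : j = j' := by
    by_contra hne
    set S := (fun w : ℝ => (w : AddCircle (1:ℝ))) '' Set.uIcc (γ (θ' + j) + (m:ℝ)) (γ (θ' + j') + (m':ℝ)) with hSdef
    have hpre : IsPreconnected S := isPreconnected_uIcc.image _ continuous_coe.continuousOn
    have hSsub : S ⊆ V j ∪ ⋃ i ∈ ({j}ᶜ : Set (Fin qn)), V i := by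
      rintro w ⟨u, hu, rfl⟩
      have := (hfibeq u).mp (h hu)
      obtain ⟨i, hi⟩ := Set.mem_iUnion.mp this
      by_cases hij : i = j
      · subst hij; exact Or.inl hi
      · exact Or.inr (Set.mem_biUnion hij hi)
    have hdisj2 : Disjoint (V j) (⋃ i ∈ ({j}ᶜ : Set (Fin qn)), V i) := by
      rw [Set.disjoint_iUnion₂_right]
      intro i hi
      have hij : i ≠ j := by simpa using hi
      exact hdisj (Ne.symm hij)
    have hSV : S ⊆ V j := by
      refine IsPreconnected.subset_left_of_subset_union (arc_isOpen (harc j)) ?_ hdisj2 hSsub ?_ hpre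
      · exact isOpen_biUnion (fun i _ => arc_isOpen (harc i))
      · refine ⟨((γ (θ' + j) + (m:ℝ) : ℝ) : AddCircle (1:ℝ)), ⟨γ (θ' + j) + (m:ℝ), Set.left_mem_uIcc, rfl⟩, ?_⟩
        rw [hca]; exact hbranch j
    have hbS : ((γ (θ' + j') + (m':ℝ) : ℝ) : AddCircle (1:ℝ)) ∈ S :=
      ⟨γ (θ' + j') + (m':ℝ), Set.right_mem_uIcc, rfl⟩
    have hbVj : ((γ (θ' + j') + (m':ℝ) : ℝ) : AddCircle (1:ℝ)) ∈ V j' := by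
      rw [hcb]; exact hbranch j'
    exact Set.disjoint_left.mp (hdisj hne) (hSV hbS) hbVj
  subst hjj
  obtain ⟨z, hzout⟩ := exists_outside hq V harc hdisj
  have hzU : z ∉ Uhat U θ' := by
    intro hmem
    obtain ⟨i, hi⟩ := Set.mem_iUnion.mp ((hfibeq z).mp hmem)
    exact hzout i hi
  have hlt := SC_lt_one hzU h
  have hint : ((m - m' : ℤ) : ℝ) = (γ (θ' + j) + (m:ℝ)) - (γ (θ' + j) + (m':ℝ)) := by
    push_cast; ring
  have habs : |m - m'| < 1 := by
    have : |((m - m' : ℤ) : ℝ)| < 1 := by rw [hint]; exact hlt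
    exact_mod_cast (by rwa [← Int.cast_abs] at this : ((|m - m'| : ℤ) : ℝ) < 1)
  refine ⟨rfl, ?_⟩
  have h0 := abs_lt.mp habs
  omega

lemma branch_exists {qn : ℕ} {γ : ℝ → ℝ} {θ' : ℝ}
    (V : Fin qn → Set (AddCircle (1:ℝ)))
    (harc : ∀ j, IsArc 1 (V j))
    (hunion : (⋃ j, V j) = fiber U (θ' : AddCircle (1:ℝ)))
    (hbranch : ∀ j : Fin qn, ((γ (θ' + j) : ℝ) : AddCircle (1:ℝ)) ∈ V j)
    {x : ℝ} (hx : x ∈ Uhat U θ') :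
    ∃ (j : Fin qn) (m : ℤ), SC U θ' x (γ (θ' + j) + m) := by
  have hxf : ((x:ℝ) : AddCircle (1:ℝ)) ∈ ⋃ i, V i := by rw [hunion]; exact hx
  obtain ⟨j, hj⟩ := Set.mem_iUnion.mp hxf
  obtain ⟨a, b, hab, hba, hVj⟩ := harc j
  rw [hVj] at hj
  obtain ⟨z, hz, hzx⟩ := hj
  obtain ⟨n1, hn1⟩ := coe_eq_coe_iff.mp hzx
  have hbj := hbranch j
  rw [hVj] at hbj
  obtain ⟨w, hw, hwγ⟩ := hbj
  obtain ⟨n2, hn2⟩ := coe_eq_coe_iff.mp hwγ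
  refine ⟨j, n1 - n2, ?_⟩
  have hy : γ (θ' + (j:ℕ)) + ((n1 - n2 : ℤ) : ℝ) = w + n1 := by
    push_cast; rw [hn2]; ring
  rw [hy, hn1]
  intro u hu
  have h1 : z ⊓ w + (n1:ℝ) ≤ u := by have := hu.1; rwa [min_add_add_right] at this
  have h2 : u ≤ z ⊔ w + (n1:ℝ) := by have := hu.2; rwa [max_add_add_right] at this
  have humem : u - n1 ∈ Set.uIcc z w := ⟨by linarith, by linarith⟩
  have hIoo : u - (n1:ℝ) ∈ Set.Ioo a b := Set.ordConnected_Ioo.uIcc_subset hz hw humem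
  have hVmem : ((u - (n1:ℝ) : ℝ) : AddCircle (1:ℝ)) ∈ V j := by
    rw [hVj]; exact ⟨u - n1, hIoo, rfl⟩
  have hcoe : ((u : ℝ) : AddCircle (1:ℝ)) = ((u - (n1:ℝ) : ℝ) : AddCircle (1:ℝ)) := by
    rw [← coe_int_add (u - (n1:ℝ)) n1, sub_add_cancel]
  have hfib : ((u:ℝ) : AddCircle (1:ℝ)) ∈ ⋃ i, V i := by
    rw [hcoe]; exact Set.mem_iUnion.mpr ⟨j, hVmem⟩
  rw [hunion] at hfib
  exact hfib

lemma zsmul_periodic {f : ℝ → ℝ} {Q K : ℝ} (hf : ∀ t, f (t + Q) = f t + K) :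
    ∀ (a : ℤ) (t : ℝ), f (t + Q * a) = f t + K * a := by
  intro a
  induction a using Int.induction_on with
  | zero => simp
  | succ n ih =>
    intro t
    push_cast at ih ⊢
    rw [show t + Q * ((n:ℝ) + 1) = (t + Q * n) + Q by ring, hf, ih]
    ring
  | pred n ih =>
    intro t
    push_cast at ih ⊢
    have hstep := hf (t + Q * (-(n:ℝ) - 1))
    rw [show t + Q * (-(n:ℝ) - 1) + Q = t + Q * (-(n:ℝ)) by ring] at hstep
    have ih' := ih t
    rw [show K * (-(n:ℝ) - 1) = K * (-(n:ℝ)) - K by ring]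
    linarith

lemma periodic_bound {f : ℝ → ℝ} (hf : Continuous f) {Q : ℝ} (hQ : 0 < Q)
    (hper : ∀ t, f (t + Q) = f t) : ∃ B : ℝ, ∀ t, |f t| ≤ B := by
  obtain ⟨B, hB⟩ := (isCompact_Icc (a := (0:ℝ)) (b := Q)).exists_bound_of_continuousOn
    hf.continuousOn
  refine ⟨B, fun t => ?_⟩
  have hz : ∀ (a : ℤ) (t : ℝ), f (t + Q * a) = f t := by
    intro a t
    have := zsmul_periodic (K := 0) (by simpa using hper) a t
    simpa using this
  set t0 := Q * Int.fract (t / Q) with ht0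
  have hte : t = t0 + Q * (⌊t / Q⌋ : ℤ) := by
    rw [ht0, Int.fract]
    field_simp
    ring
  have hft : f t = f t0 := by rw [hte, hz]
  have ht0mem : t0 ∈ Set.Icc 0 Q := by
    constructor
    · exact mul_nonneg hQ.le (Int.fract_nonneg _)
    · nlinarith [Int.fract_lt_one (t / Q), Int.fract_nonneg (t / Q)]
  have := hB t0 ht0mem
  rwa [Real.norm_eq_abs, ← hft] at this

end StripProofAux
namespace StripProofAux

lemma T_iterate {F : ℝ → ℝ → ℝ} {ω : ℝ}
    {T : AddCircle (1:ℝ) × AddCircle (1:ℝ) → AddCircle (1:ℝ) × AddCircle (1:ℝ)}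
    (hproj : ∀ θ x : ℝ, T ((θ : AddCircle (1:ℝ)), (x : AddCircle (1:ℝ))) =
      (((θ + ω : ℝ) : AddCircle (1:ℝ)), ((F θ x : ℝ) : AddCircle (1:ℝ))))
    (n : ℕ) (θ x : ℝ) :
    T^[n] ((θ : AddCircle (1:ℝ)), (x : AddCircle (1:ℝ))) =
      (((θ + n * ω : ℝ) : AddCircle (1:ℝ)), ((fibIter F ω θ n x : ℝ) : AddCircle (1:ℝ))) := by
  induction n with
  | zero => norm_num [fibIter]
  | succ n ih =>
    rw [Function.iterate_succ_apply', ih, hproj]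
    have h1 : (θ + (n:ℝ) * ω) + ω = θ + ((n:ℕ) + 1 : ℕ) * ω := by push_cast; ring
    rw [h1]
    rfl

end StripProofAux
open StripProofAux in
/-- the existence of a `p,q`-invariant strip forces the rotation numbers
to be rationally dependent, and all orbits to be `ρ_T`-bounded. -/
theorem strip_implies_rational_dependence
    (F : ℝ → ℝ → ℝ) (ω : ℝ) (hirr : Irrational ω)
    (hFc : Continuous fun p : ℝ × ℝ => F p.1 p.2)
    (hFm : ∀ θ : ℝ, StrictMono (F θ))
    (hFs : ∀ θ : ℝ, Function.Surjective (F θ))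
    (hFx : ∀ θ x : ℝ, F θ (x + 1) = F θ x + 1)
    (hFθ : ∀ θ x : ℝ, F (θ + 1) x = F θ x)
    (T : AddCircle (1:ℝ) × AddCircle (1:ℝ) → AddCircle (1:ℝ) × AddCircle (1:ℝ))
    (hproj : ∀ θ x : ℝ,
      T ((θ : AddCircle (1:ℝ)), (x : AddCircle (1:ℝ))) =
        (((θ + ω : ℝ) : AddCircle (1:ℝ)), ((F θ x : ℝ) : AddCircle (1:ℝ))))
    (ρ : ℝ)
    (hρ : ∀ θ x : ℝ, Tendsto (fun n : ℕ => (fibIter F ω θ n x - x) / n) atTop (nhds ρ))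
    (hstrip : ∃ (p q : ℕ) (A : Set (AddCircle (1:ℝ) × AddCircle (1:ℝ))),
      IsPQInvStrip 1 1 T p q A) :
    (∃ l k q' : ℤ, q' ≠ 0 ∧ (q' : ℝ) * ρ = (k : ℝ) * ω + (l : ℝ)) ∧
    ∃ C : ℝ, ∀ (θ x : ℝ) (n : ℕ), |fibIter F ω θ n x - x - n * ρ| ≤ C := by
  classical
  obtain ⟨p, q, A, hstripA⟩ := hstrip
  obtain ⟨hp, hq, _, _, hTube⟩ := hstripA
  obtain ⟨U1, γ, k, hU1open, hγc, hγq0, _, hTpU1, hV, _, _⟩ := hTube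
  have hγq : ∀ t : ℝ, γ (t + q) = γ t + k := by
    intro t; have := hγq0 t; simpa using this
  -- the branch points lie in the tube
  have hmemU1 : ∀ t : ℝ, γ t ∈ Uhat U1 t := by
    intro t
    obtain ⟨V, harc, hdisj, hunion, hbranch⟩ := hV t
    have h0 := hbranch ⟨0, hq⟩
    simp only [Fin.val_mk, Nat.cast_zero, zero_mul, add_zero, mul_one] at h0
    have hmem : ((γ t : ℝ) : AddCircle (1:ℝ)) ∈ ⋃ j, V j := Set.mem_iUnion.mpr ⟨_, h0⟩
    rw [hunion] at hmem
    exact hmem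
  -- the p-th iterate maps fibres of the tube into fibres of the tube
  have hmap : ∀ θ : ℝ, ∀ z ∈ Uhat U1 θ, fibIter F ω θ p z ∈ Uhat U1 (θ + p * ω) := by
    intro θ z hz
    have h1 : ((θ : AddCircle (1:ℝ)), ((z:ℝ) : AddCircle (1:ℝ))) ∈ U1 := hz
    have h2 : T^[p] ((θ : AddCircle (1:ℝ)), ((z:ℝ) : AddCircle (1:ℝ))) ∈ U1 := by
      rw [← hTpU1]; exact ⟨_, h1, rfl⟩
    rw [T_iterate hproj] at h2
    exact h2
  -- the image of the curve after p steps
  set g : ℝ → ℝ := fun t => fibIter F ω t p (γ t) with hgdef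
  have hgc : Continuous g := (fibIter_cont hFc p).comp (continuous_id.prodMk hγc)
  have hgU : ∀ t : ℝ, g t ∈ Uhat U1 (t + p * ω) := fun t => hmap t (γ t) (hmemU1 t)
  -- the partition of ℝ according to which branch the image of the curve lands
  set S : Fin q × ℤ → Set ℝ :=
    fun c => {t : ℝ | SC U1 (t + p * ω) (g t) (γ (t + p * ω + (c.1 : ℕ)) + (c.2 : ℝ))} with hSdef
  have hSopen : ∀ c, IsOpen (S c) := by
    intro c
    exact SC_open hU1open g (fun t => γ (t + p * ω + (c.1 : ℕ)) + (c.2 : ℝ)) hgc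
      ((hγc.comp (by continuity)).add continuous_const) (p * ω)
  have hcover : ∀ t : ℝ, ∃ c : Fin q × ℤ, t ∈ S c := by
    intro t
    obtain ⟨V, harc, hdisj, hunion, hbranch⟩ := hV (t + p * ω)
    have hbranch' : ∀ j : Fin q, ((γ (t + p * ω + (j : ℕ)) : ℝ) : AddCircle (1:ℝ)) ∈ V j := by
      intro j; have := hbranch j; simpa using this
    obtain ⟨j, m, hsc⟩ := branch_exists V harc hunion hbranch' (hgU t)
    exact ⟨(j, m), hsc⟩
  have huniq : ∀ (t : ℝ) (c c' : Fin q × ℤ), t ∈ S c → t ∈ S c' → c = c' := by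
    intro t c c' h1 h2
    obtain ⟨V, harc, hdisj, hunion, hbranch⟩ := hV (t + p * ω)
    have hbranch' : ∀ j : Fin q, ((γ (t + p * ω + (j : ℕ)) : ℝ) : AddCircle (1:ℝ)) ∈ V j := by
      intro j; have := hbranch j; simpa using this
    have hsc : SC U1 (t + p * ω) (γ (t + p * ω + (c.1 : ℕ)) + (c.2 : ℝ))
        (γ (t + p * ω + (c'.1 : ℕ)) + (c'.2 : ℝ)) := (SC.symm h1).trans h2
    have := branch_uniq V hq harc hdisj hunion hbranch' hsc
    exact Prod.ext this.1 this.2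
  obtain ⟨c0, hc0⟩ := hcover 0
  have hSc0 : S c0 = Set.univ := by
    have hclosed : IsClosed (S c0) := by
      rw [← isOpen_compl_iff]
      have hcompl : (S c0)ᶜ = ⋃ c ∈ {c : Fin q × ℤ | c ≠ c0}, S c := by
        ext t
        simp only [Set.mem_compl_iff, Set.mem_iUnion, Set.mem_setOf_eq, exists_prop]
        constructor
        · intro ht
          obtain ⟨c, hc⟩ := hcover t
          exact ⟨c, fun he => ht (he ▸ hc), hc⟩
        · rintro ⟨c, hne, hc⟩ hc0mem
          exact hne (huniq t c c0 hc hc0mem)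
      rw [hcompl]
      exact isOpen_biUnion fun c _ => hSopen c
    rcases isClopen_iff.mp ⟨hclosed, hSopen c0⟩ with he | he
    · rw [he] at hc0; exact absurd hc0 (Set.notMem_empty 0)
    · exact he
  have hkey : ∀ t : ℝ, SC U1 (t + p * ω) (g t) (γ (t + p * ω + (c0.1 : ℕ)) + (c0.2 : ℝ)) := by
    intro t
    have : t ∈ S c0 := by rw [hSc0]; exact Set.mem_univ t
    exact this
  set js : ℕ := (c0.1 : ℕ) with hjs
  set ms : ℤ := c0.2 with hms
  -- the main induction: the orbit of the curve stays one component away from a translated branch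
  have hmain : ∀ (t : ℝ) (n : ℕ),
      SC U1 (t + ((n * p : ℕ) : ℝ) * ω) (fibIter F ω t (n * p) (γ t))
        (γ (t + ((n * p : ℕ) : ℝ) * ω + ((n * js : ℕ) : ℝ)) + (((n : ℤ) * ms : ℤ) : ℝ)) := by
    intro t n
    induction n with
    | zero =>
      simp only [Nat.zero_mul, Nat.cast_zero, zero_mul, add_zero, Int.cast_zero]
      exact SC.refl (hmemU1 t)
    | succ n ih =>
      set θ0 : ℝ := t + ((n * p : ℕ) : ℝ) * ω with hθ0
      set u : ℝ := θ0 + ((n * js : ℕ) : ℝ) with hudef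
      have hstep1 := ih.map (G := fun z => fibIter F ω θ0 p z)
        ((fibIter_cont hFc p).comp (continuous_const.prodMk continuous_id))
        (fun z hz => hmap θ0 z hz)
      have hstep1' : SC U1 (θ0 + (p:ℝ) * ω)
          (fibIter F ω θ0 p (fibIter F ω t (n * p) (γ t)))
          (fibIter F ω θ0 p (γ u + (((n : ℤ) * ms : ℤ) : ℝ))) := hstep1
      have hval : fibIter F ω θ0 p (γ u + (((n : ℤ) * ms : ℤ) : ℝ)) = g u + (((n : ℤ) * ms : ℤ) : ℝ) := by
        rw [fibIter_int hFx]
        congr 1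
        have h1 : fibIter F ω u p (γ u) = fibIter F ω θ0 p (γ u) := by
          rw [hudef, show ((n * js : ℕ) : ℝ) = (((n * js : ℕ) : ℤ) : ℝ) by push_cast; ring,
            fibIter_base_int hFθ]
        exact h1.symm
      rw [hval] at hstep1'
      have hk := (hkey u).int ((n : ℤ) * ms)
      have hk' : SC U1 (θ0 + (p:ℝ) * ω) (g u + (((n:ℤ) * ms : ℤ) : ℝ))
          (γ (u + (p:ℝ) * ω + (js : ℝ)) + (ms : ℝ) + (((n:ℤ) * ms : ℤ) : ℝ)) := by
        refine SC.base_congr (-((n * js : ℕ) : ℤ)) ?_ hk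
        rw [hudef]; push_cast; ring
      have hfin := hstep1'.trans hk'
      rw [hudef, hθ0] at hfin
      have e2 : t + ((n*p:ℕ):ℝ)*ω + (p:ℝ)*ω = t + (((n+1)*p : ℕ):ℝ)*ω := by push_cast; ring
      have e3 : t + ((n*p:ℕ):ℝ)*ω + ((n*js:ℕ):ℝ) + (p:ℝ)*ω + (js:ℝ)
          = t + (((n+1)*p:ℕ):ℝ)*ω + (((n+1)*js:ℕ):ℝ) := by push_cast; ring
      have e4 : (ms:ℝ) + (((n:ℤ)*ms : ℤ):ℝ) = ((((n+1:ℕ):ℤ)*ms : ℤ):ℝ) := by push_cast; ring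
      rw [e2, e3] at hfin
      rw [add_assoc, e4] at hfin
      rw [show (n+1)*p = n*p + p from Nat.succ_mul n p, fibIter_add,
        show (n*p+p:ℕ) = (n+1)*p from (Nat.succ_mul n p).symm]
      exact hfin
  -- an excluded point in every fibre
  have hout : ∀ θ : ℝ, ∃ z : ℝ, z ∉ Uhat U1 θ := by
    intro θ
    obtain ⟨V, harc, hdisj, hunion, hbranch⟩ := hV θ
    obtain ⟨z, hz⟩ := exists_outside hq V harc hdisj
    refine ⟨z, fun hmem => ?_⟩
    have hmem2 : ((z:ℝ) : AddCircle (1:ℝ)) ∈ ⋃ i, V i := by rw [hunion]; exact hmem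
    obtain ⟨i, hi⟩ := Set.mem_iUnion.mp hmem2
    exact hz i hi
  have hQpos : (0:ℝ) < (q:ℝ) := by exact_mod_cast hq
  have hPpos : (0:ℝ) < (p:ℝ) := by exact_mod_cast hp
  -- the bounded periodic part of γ
  set f : ℝ → ℝ := fun s => γ s - ((k:ℝ)/(q:ℝ)) * s with hfdef
  have hfc : Continuous f := hγc.sub (continuous_const.mul continuous_id)
  have hkq : ((k:ℝ)/(q:ℝ)) * (q:ℝ) = (k:ℝ) := div_mul_cancel₀ _ (ne_of_gt hQpos)
  have hfper : ∀ s, f (s + (q:ℝ)) = f s := by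
    intro s
    have h2 : ((k:ℝ)/(q:ℝ)) * (s + (q:ℝ)) = ((k:ℝ)/(q:ℝ)) * s + (k:ℝ) := by
      rw [mul_add, hkq]
    simp only [hfdef]
    rw [hγq s, h2]
    ring
  obtain ⟨B, hB⟩ := periodic_bound hfc hQpos hfper
  have hBpos : 0 ≤ B := le_trans (abs_nonneg _) (hB 0)
  set R : ℝ := ((k:ℝ)/(q:ℝ)) * ((p:ℝ)*ω + (js:ℝ)) + (ms:ℝ) with hRdef
  have hdev : ∀ (t : ℝ) (n : ℕ),
      |fibIter F ω t (n*p) (γ t) - γ t - n * R| ≤ 2*B + 1 := by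
    intro t n
    obtain ⟨z, hz⟩ := hout (t + ((n*p:ℕ):ℝ)*ω)
    have hlt := SC_lt_one hz (hmain t n)
    set s' : ℝ := t + ((n*p:ℕ):ℝ)*ω + ((n*js:ℕ):ℝ) with hs'
    have hiden : fibIter F ω t (n*p) (γ t) - γ t - n * R
        = (fibIter F ω t (n*p) (γ t) - (γ s' + (((n:ℤ)*ms : ℤ):ℝ))) + (f s' - f t) := by
      simp only [hfdef]
      rw [hs', hRdef]
      push_cast
      ring
    rw [hiden]
    have htri : |(fibIter F ω t (n*p) (γ t) - (γ s' + (((n:ℤ)*ms : ℤ):ℝ))) + (f s' - f t)|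
        ≤ |fibIter F ω t (n*p) (γ t) - (γ s' + (((n:ℤ)*ms : ℤ):ℝ))| + |f s' - f t| := abs_add_le _ _
    have htri2 : |f s' - f t| ≤ |f s'| + |f t| := by
      rw [sub_eq_add_neg]
      exact (abs_add_le _ _).trans (by rw [abs_neg])
    have hb1 := hB s'
    have hb2 := hB t
    linarith [hlt.le]
  -- identification of the rotation number
  have hmulp : Tendsto (fun n : ℕ => n * p) atTop atTop :=
    Filter.tendsto_atTop_atTop.mpr
      (fun b => ⟨b, fun a ha => le_trans ha (Nat.le_mul_of_pos_right a hp)⟩)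
  have hl1 : Tendsto (fun n : ℕ => (fibIter F ω 0 (n*p) (γ 0) - γ 0) / ((n*p : ℕ):ℝ))
      atTop (nhds ρ) := (hρ 0 (γ 0)).comp hmulp
  have hl2 : Tendsto (fun n : ℕ =>
      (fibIter F ω 0 (n*p) (γ 0) - γ 0) / ((n*p : ℕ):ℝ) - R / (p:ℝ)) atTop (nhds 0) := by
    apply squeeze_zero_norm' (a := fun n : ℕ => (2*B+1) / (n:ℝ))
    · filter_upwards [Filter.eventually_ge_atTop 1] with n hn
      have hn0 : (0:ℝ) < (n:ℝ) := by exact_mod_cast hn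
      have hnp : (0:ℝ) < ((n*p:ℕ):ℝ) := by exact_mod_cast Nat.mul_pos hn hp
      have hiden : (fibIter F ω 0 (n*p) (γ 0) - γ 0) / ((n*p:ℕ):ℝ) - R / (p:ℝ)
          = (fibIter F ω 0 (n*p) (γ 0) - γ 0 - n * R) / ((n*p:ℕ):ℝ) := by
        rw [div_sub_div _ _ (ne_of_gt hnp) (ne_of_gt hPpos), div_eq_div_iff
          (by positivity) (ne_of_gt hnp)]
        push_cast
        ring
      rw [Real.norm_eq_abs, hiden, abs_div, abs_of_pos hnp]
      have h1 : (n:ℝ) ≤ ((n*p:ℕ):ℝ) := by exact_mod_cast Nat.le_mul_of_pos_right n hp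
      exact div_le_div₀ (by linarith) (hdev 0 n) hn0 h1
    · exact tendsto_const_div_atTop_nhds_zero_nat (2*B+1)
  have hl3 : Tendsto (fun n : ℕ => (fibIter F ω 0 (n*p) (γ 0) - γ 0) / ((n*p : ℕ):ℝ))
      atTop (nhds (R / (p:ℝ))) := by
    have := hl2.add_const (R / (p:ℝ))
    simpa using this
  have hpρ : (p:ℝ) * ρ = R := by
    have hρeq : ρ = R / (p:ℝ) := tendsto_nhds_unique hl1 hl3
    rw [hρeq]
    field_simp
  have h2 : (q:ℝ) * R = (k:ℝ)*((p:ℝ)*ω+(js:ℝ)) + (q:ℝ)*(ms:ℝ) := by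
    rw [hRdef]
    linear_combination ((p:ℝ)*ω + (js:ℝ)) * hkq
  constructor
  · refine ⟨k * (js:ℤ) + (q:ℤ) * ms, k * (p:ℤ), (p:ℤ) * (q:ℤ), ?_, ?_⟩
    · exact_mod_cast (Nat.mul_pos hp hq).ne'
    · push_cast
      linear_combination (q:ℝ) * hpρ + h2
  -- part 2 : ρ-boundedness of all orbits
  have hdev2 : ∀ (t : ℝ) (n : ℕ),
      |fibIter F ω t (n*p) (γ t) - γ t - ((n*p:ℕ):ℝ) * ρ| ≤ 2*B + 1 := by
    intro t n
    have he : ((n*p:ℕ):ℝ) * ρ = n * R := by push_cast; rw [← hpρ]; ring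
    rw [he]; exact hdev t n
  have hMc : Continuous (fun pr : ℝ × ℝ => F pr.1 pr.2 - pr.2) := hFc.sub continuous_snd
  obtain ⟨M, hM⟩ := ((isCompact_Icc (a := (0:ℝ)) (b := 1)).prod
    (isCompact_Icc (a := (0:ℝ)) (b := 1))).exists_bound_of_continuousOn hMc.continuousOn
  have hMall : ∀ θ x : ℝ, |F θ x - x| ≤ M := by
    intro θ x
    have hθeq : θ = Int.fract θ + ((⌊θ⌋ : ℤ):ℝ) := by rw [Int.fract]; ring
    have hxeq : x = Int.fract x + ((⌊x⌋ : ℤ):ℝ) := by rw [Int.fract]; ring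
    have h1 : F θ x = F (Int.fract θ) x := by
      conv_lhs => rw [hθeq]
      rw [Fθ_int hFθ]
    have hF2 : F (Int.fract θ) x = F (Int.fract θ) (Int.fract x) + ((⌊x⌋:ℤ):ℝ) := by
      conv_lhs => rw [hxeq]
      rw [F_int hFx]
    have h4 : F θ x - x = F (Int.fract θ) (Int.fract x) - Int.fract x := by
      rw [h1, hF2]; linarith [hxeq]
    rw [h4]
    have := hM (Int.fract θ, Int.fract x)
      ⟨⟨Int.fract_nonneg θ, (Int.fract_lt_one θ).le⟩,
       ⟨Int.fract_nonneg x, (Int.fract_lt_one x).le⟩⟩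
    rwa [Real.norm_eq_abs] at this
  have hM0 : 0 ≤ M := le_trans (abs_nonneg _) (hMall 0 0)
  have hrstep : ∀ (θ x : ℝ) (r : ℕ), |fibIter F ω θ r x - x| ≤ r * M := by
    intro θ x r
    induction r with
    | zero => norm_num [fibIter]
    | succ r ih =>
      have h1 := hMall (θ + r * ω) (fibIter F ω θ r x)
      have h2 : fibIter F ω θ (r+1) x - x
          = (F (θ + r*ω) (fibIter F ω θ r x) - fibIter F ω θ r x) + (fibIter F ω θ r x - x) := by
        rw [fibIter_succ]; ring
      rw [h2]
      have h3 := abs_add_le (F (θ + r*ω) (fibIter F ω θ r x) - fibIter F ω θ r x)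
        (fibIter F ω θ r x - x)
      have h5 : ((r+1:ℕ):ℝ) * M = M + (r:ℝ)*M := by push_cast; ring
      rw [h5]
      linarith
  refine ⟨(2*B + 3) + (p:ℝ) * (M + |ρ|), ?_⟩
  intro θ x n
  set sN : ℕ := n / p with hsN
  set r : ℕ := n % p with hrr
  have hnr : sN * p + r = n := by
    rw [hsN, hrr, Nat.mul_comm]
    exact Nat.div_add_mod n p
  have hrp : r < p := by rw [hrr]; exact Nat.mod_lt n hp
  set d : ℤ := ⌈x - γ θ⌉ with hd
  have hd1 : x ≤ γ θ + d := by
    have := Int.le_ceil (x - γ θ); rw [← hd] at this; linarith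
  have hd2 : γ θ + (d:ℝ) - 1 ≤ x := by
    have := Int.ceil_lt_add_one (x - γ θ); rw [← hd] at this; linarith
  set Y : ℝ := fibIter F ω θ (sN * p) (γ θ) with hY
  have hm1 : fibIter F ω θ (sN*p) x ≤ Y + d := by
    have hmono := fibIter_mono (F := F) (ω := ω) hFm θ (sN*p) hd1
    rwa [fibIter_int hFx] at hmono
  have hm2 : Y + (d:ℝ) - 1 ≤ fibIter F ω θ (sN*p) x := by
    have h' : γ θ + ((d - 1 : ℤ):ℝ) ≤ x := by push_cast; linarith
    have hmono := fibIter_mono (F := F) (ω := ω) hFm θ (sN*p) h'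
    rw [fibIter_int hFx] at hmono
    push_cast at hmono
    linarith
  have hdevN := abs_le.mp (hdev2 θ sN)
  have hbound1 : |fibIter F ω θ (sN*p) x - x - ((sN*p:ℕ):ℝ) * ρ| ≤ 2*B + 2 := by
    apply abs_le.mpr
    constructor
    · linarith [hdevN.1, hdevN.2]
    · linarith [hdevN.1, hdevN.2]
  have hsplit : fibIter F ω θ n x
      = fibIter F ω (θ + ((sN*p:ℕ):ℝ)*ω) r (fibIter F ω θ (sN*p) x) := by
    conv_lhs => rw [← hnr]
    rw [fibIter_add]
  have hstep := abs_le.mp (hrstep (θ + ((sN*p:ℕ):ℝ)*ω) (fibIter F ω θ (sN*p) x) r)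
  have hrM : (r:ℝ) * M ≤ (p:ℝ) * M :=
    mul_le_mul_of_nonneg_right (by exact_mod_cast hrp.le) hM0
  have hrρabs : |(r:ℝ) * ρ| ≤ (p:ℝ) * |ρ| := by
    rw [abs_mul, abs_of_nonneg (by positivity : (0:ℝ) ≤ (r:ℝ))]
    exact mul_le_mul_of_nonneg_right (by exact_mod_cast hrp.le) (abs_nonneg ρ)
  have habs3 := abs_le.mp hrρabs
  have hnρ : (n:ℝ) * ρ = ((sN*p:ℕ):ℝ) * ρ + (r:ℝ) * ρ := by
    have : (n:ℝ) = ((sN*p:ℕ):ℝ) + (r:ℝ) := by exact_mod_cast hnr.symm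
    rw [this]; ring
  rw [hsplit]
  have hbound1' := abs_le.mp hbound1
  apply abs_le.mpr
  constructor
  · linarith [hstep.1, hstep.2, hbound1'.1, hbound1'.2, habs3.1, habs3.2]
  · linarith [hstep.1, hstep.2, hbound1'.1, hbound1'.2, habs3.1, habs3.2]

end
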